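/- Let E be a finite-dimensional real inner product space of dimension d ≥ 1, let L : E → E be a linear map, and let 1 ≤ ℓ ≤ d. Then the supremum, over all linearly independent tuples (v_1, …, v_ℓ) of vectors of E, of the ratio vol(L v_1, …, L v_ℓ)/vol(v_1, …, v_ℓ) equals σ_1(L)⋯σ_ℓ(L); in particular vol(L v_1, …, L v_ℓ) ≤ σ_1(L)⋯σ_ℓ(L) · vol(v_1, …, v_ℓ) for every tuple (v_1, …, v_ℓ) of vectors of E. -/

import Mathlib

noncomputable section

/-- `σ : Fin d → ℝ` is the (decreasingly ordered) sequence of singular values of the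
linear map `L` on the `d`-dimensional real inner product space `E`. -/
def IsSingularValues {E : Type*} [NormedAddCommGroup E] [InnerProductSpace ℝ E]
    [FiniteDimensional ℝ E] (d : ℕ) (L : E →ₗ[ℝ] E) (σ : Fin d → ℝ) : Prop :=
  Antitone σ ∧ (∀ i, 0 ≤ σ i) ∧
    ∃ b : OrthonormalBasis (Fin d) ℝ E,
      ∀ i, (LinearMap.adjoint L ∘ₗ L) (b i) = (σ i ^ 2 : ℝ) • b i

/-- The product `σ_1 ⋯ σ_ℓ` of the first `ℓ` singular values. -/
def sigmaProd {d : ℕ} (σ : Fin d → ℝ) (ℓ : ℕ) : ℝ :=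
  ∏ i ∈ Finset.univ.filter (fun i : Fin d => (i : ℕ) < ℓ), σ i

/-- The `ℓ`-dimensional volume `vol(v_1, …, v_ℓ) = sqrt(det G)` of the parallelepiped
spanned by `v_1, …, v_ℓ`, where `G` is the Gram matrix `G_{ij} = ⟨v_i, v_j⟩`. -/
def gramVol {E : Type*} [NormedAddCommGroup E] [InnerProductSpace ℝ E]
    {ℓ : ℕ} (v : Fin ℓ → E) : ℝ :=
  Real.sqrt (Matrix.det (Matrix.of fun i j : Fin ℓ => (inner ℝ (v i) (v j) : ℝ)))

section Aux

open Finset Matrix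

variable {R : Type*} [CommRing R]


open scoped Classical in
theorem my_cauchyBinet {l d : ℕ} (M : Matrix (Fin l) (Fin d) R) (N : Matrix (Fin d) (Fin l) R) :
    Matrix.det (M * N) = ∑ g ∈ Finset.univ.filter (fun g : Fin l → Fin d => StrictMono g),
      Matrix.det (M.submatrix id g) * Matrix.det (N.submatrix g id) := by
  have step1 : Matrix.det (M * N)
      = ∑ p : Fin l → Fin d, (∏ i, N (p i) i) * Matrix.det (M.submatrix id p) := by
    calc Matrix.det (M * N)
        = ∑ p : Fin l → Fin d, ∑ σ : Equiv.Perm (Fin l),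
            Equiv.Perm.sign σ • ∏ i, M (σ i) (p i) * N (p i) i := by
          simp only [Matrix.det_apply, Matrix.mul_apply, Finset.prod_univ_sum, Finset.smul_sum,
            Fintype.piFinset_univ]
          rw [Finset.sum_comm]
      _ = _ := by
          refine Finset.sum_congr rfl fun p _ => ?_
          rw [Matrix.det_apply, Finset.mul_sum]
          refine Finset.sum_congr rfl fun σ _ => ?_
          simp only [Matrix.submatrix_apply, id_eq, Finset.prod_mul_distrib]
          rw [mul_smul_comm, mul_comm]
  rw [step1]
  have step2 : ∑ p : Fin l → Fin d, (∏ i, N (p i) i) * Matrix.det (M.submatrix id p)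
      = ∑ p ∈ univ.filter (fun p : Fin l → Fin d => Function.Injective p),
          (∏ i, N (p i) i) * Matrix.det (M.submatrix id p) := by
    refine (Finset.sum_subset (filter_subset _ _) fun p _ hp => ?_).symm
    have hni : ¬ Function.Injective p := by simpa using hp
    rw [Function.Injective] at hni
    push_neg at hni
    obtain ⟨i, j, hij, hne⟩ := hni
    have : Matrix.det (M.submatrix id p) = 0 :=
      Matrix.det_zero_of_column_eq hne (fun k => by simp [hij])
    rw [this, mul_zero]
  rw [step2]
  have step3 : ∑ p ∈ univ.filter (fun p : Fin l → Fin d => Function.Injective p),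
          (∏ i, N (p i) i) * Matrix.det (M.submatrix id p)
      = ∑ x ∈ (univ.filter (fun g : Fin l → Fin d => StrictMono g)) ×ˢ
            (univ : Finset (Equiv.Perm (Fin l))),
          (∏ i, N (x.1 (x.2 i)) i) * Matrix.det (M.submatrix id (x.1 ∘ x.2)) := by
    refine (Finset.sum_bij (fun x _ => x.1 ∘ x.2) ?_ ?_ ?_ ?_).symm
    · rintro ⟨g, π⟩ hx
      simp only [Finset.mem_product, Finset.mem_filter, Finset.mem_univ, true_and] at hx ⊢
      exact hx.1.injective.comp π.injective
    · rintro ⟨g1, π1⟩ hx1 ⟨g2, π2⟩ hx2 heq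
      simp only [Finset.mem_product, Finset.mem_filter, Finset.mem_univ, true_and,
        Finset.mem_univ, and_true] at hx1 hx2
      have himg : Finset.image g1 univ = Finset.image g2 univ := by
        have h1 : Finset.image (g1 ∘ π1) univ = Finset.image g1 univ := by
          rw [← Finset.image_image]
          congr 1
          exact Finset.image_univ_equiv π1
        have h2 : Finset.image (g2 ∘ π2) univ = Finset.image g2 univ := by
          rw [← Finset.image_image]
          congr 1
          exact Finset.image_univ_equiv π2
        have heq' : g1 ∘ π1 = g2 ∘ π2 := heq
        rw [← h1, ← h2, heq']
      have hcard : (Finset.image g1 univ).card = l := by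
        rw [Finset.card_image_of_injective _ hx1.injective, Finset.card_univ,
          Fintype.card_fin]
      have hg1 : g1 = (Finset.image g1 univ).orderEmbOfFin hcard :=
        Finset.orderEmbOfFin_unique hcard (fun i => Finset.mem_image_of_mem _ (mem_univ i)) hx1
      have hcard2 : (Finset.image g1 univ).card = l := hcard
      have hg2 : g2 = (Finset.image g1 univ).orderEmbOfFin hcard :=
        Finset.orderEmbOfFin_unique hcard
          (fun i => himg ▸ Finset.mem_image_of_mem _ (mem_univ i)) hx2
      have hgg : g1 = g2 := hg1.trans hg2.symm
      subst hgg
      have hππ : π1 = π2 := by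
        ext i
        have heq' : g1 ∘ π1 = g1 ∘ π2 := heq
        exact congrArg Fin.val (hx1.injective (congrFun heq' i))
      rw [hππ]
    · intro p hp
      simp only [Finset.mem_filter, Finset.mem_univ, true_and] at hp
      set S := Finset.image p univ with hSdef
      have hS : S.card = l := by
        rw [hSdef, Finset.card_image_of_injective _ hp, Finset.card_univ, Fintype.card_fin]
      have hgm : StrictMono (S.orderEmbOfFin hS) := (S.orderEmbOfFin hS).strictMono
      let e2 : Fin l ≃ S := Equiv.ofBijective
        (fun i => (⟨p i, Finset.mem_image_of_mem _ (mem_univ i)⟩ : S))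
        ((Fintype.bijective_iff_injective_and_card _).mpr
          ⟨fun a b h => hp (congrArg Subtype.val h),
            by simp [Fintype.card_coe, hS]⟩)
      refine ⟨⟨(S.orderEmbOfFin hS : Fin l → Fin d), e2.trans (S.orderIsoOfFin hS).toEquiv.symm⟩,
        ?_, ?_⟩
      · simp only [Finset.mem_product, Finset.mem_filter, Finset.mem_univ, true_and, and_true]
        exact hgm
      · funext i
        show (S.orderEmbOfFin hS) ((S.orderIsoOfFin hS).toEquiv.symm (e2 i)) = p i
        rw [← Finset.coe_orderIsoOfFin_apply]
        show ((S.orderIsoOfFin hS) ((S.orderIsoOfFin hS).symm (e2 i)) : Fin d) = p i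
        rw [OrderIso.apply_symm_apply]
        rfl
    · rintro ⟨g, π⟩ hx
      rfl
  rw [step3, Finset.sum_product]
  refine Finset.sum_congr rfl fun g hg => ?_
  have hgm : StrictMono g := by simpa using hg
  have hdet : ∀ π : Equiv.Perm (Fin l),
      Matrix.det (M.submatrix id (g ∘ π))
        = (Equiv.Perm.sign π : ℤ) * Matrix.det (M.submatrix id g) := by
    intro π
    have : M.submatrix id (g ∘ π) = (M.submatrix id g).submatrix id π := by
      rw [Matrix.submatrix_submatrix]; rfl
    rw [this, Matrix.det_permute']
  calc ∑ π : Equiv.Perm (Fin l), (∏ i, N (g (π i)) i) * Matrix.det (M.submatrix id (g ∘ π))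
      = (∑ π : Equiv.Perm (Fin l), Equiv.Perm.sign π • ∏ i, N (g (π i)) i)
          * Matrix.det (M.submatrix id g) := by
        rw [Finset.sum_mul]
        refine Finset.sum_congr rfl fun π _ => ?_
        rw [hdet π]
        simp only [Units.smul_def, zsmul_eq_mul]
        ring
    _ = Matrix.det (M.submatrix id g) * Matrix.det (N.submatrix g id) := by
        rw [mul_comm]
        congr 1
        simp [Matrix.det_apply]


lemma my_strictMono_val_le {l d : ℕ} {g : Fin l → Fin d} (hg : StrictMono g) (i : Fin l) :
    (i : ℕ) ≤ (g i : ℕ) := by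
  obtain ⟨n, hn⟩ := i
  induction n with
  | zero => exact Nat.zero_le _
  | succ n ih =>
    have hn' : n < l := Nat.lt_of_succ_lt hn
    have h1 := ih hn'
    have h2 : g ⟨n, hn'⟩ < g ⟨n + 1, hn⟩ := hg (by simp [Fin.lt_def])
    rw [Fin.lt_def] at h2
    simp only [Fin.val_mk] at h1 h2 ⊢
    omega

lemma my_sigmaProd_eq {d l : ℕ} (hld : l ≤ d) (σ : Fin d → ℝ) :
    sigmaProd σ l = ∏ i : Fin l, σ (Fin.castLE hld i) := by
  unfold sigmaProd
  have himg : Finset.univ.filter (fun i : Fin d => (i : ℕ) < l)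
      = Finset.image (Fin.castLE hld) Finset.univ := by
    ext x
    simp only [Finset.mem_filter, Finset.mem_univ, true_and, Finset.mem_image]
    constructor
    · intro hx
      exact ⟨⟨(x : ℕ), hx⟩, Fin.ext rfl⟩
    · rintro ⟨j, rfl⟩
      exact j.isLt
  rw [himg, Finset.prod_image (fun a _ b _ h => Fin.castLE_injective hld h)]

lemma my_prod_g_le {d l : ℕ} (hld : l ≤ d) {σ : Fin d → ℝ} (hmono : Antitone σ)
    (hpos : ∀ i, 0 ≤ σ i) {g : Fin l → Fin d} (hg : StrictMono g) :
    ∏ i : Fin l, σ (g i) ≤ ∏ i : Fin l, σ (Fin.castLE hld i) :=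
  Finset.prod_le_prod (fun i _ => hpos _)
    (fun i _ => hmono (by rw [Fin.le_def]; exact my_strictMono_val_le hg i))

lemma my_det_transpose_mul_self_nonneg {d l : ℕ} (A : Matrix (Fin d) (Fin l) ℝ) :
    0 ≤ Matrix.det (Aᵀ * A) := by
  classical
  rw [my_cauchyBinet]
  refine Finset.sum_nonneg fun g _ => ?_
  have h : (Aᵀ).submatrix id g = (A.submatrix g id)ᵀ := by
    rw [Matrix.transpose_submatrix]
  rw [h, Matrix.det_transpose, ← sq]
  exact sq_nonneg _

lemma my_key_matrix {d l : ℕ} (hld : l ≤ d) (σ : Fin d → ℝ) (hmono : Antitone σ)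
    (hpos : ∀ i, 0 ≤ σ i) (A : Matrix (Fin d) (Fin l) ℝ) :
    Matrix.det ((Matrix.of fun k j => σ k * A k j)ᵀ * (Matrix.of fun k j => σ k * A k j))
      ≤ (∏ i : Fin l, σ (Fin.castLE hld i)) ^ 2 * Matrix.det (Aᵀ * A) := by
  classical
  rw [my_cauchyBinet, my_cauchyBinet, Finset.mul_sum]
  refine Finset.sum_le_sum fun g hg => ?_
  have hgm : StrictMono g := by simpa using hg
  set C : Matrix (Fin d) (Fin l) ℝ := Matrix.of fun k j => σ k * A k j with hC
  have h1 : (Cᵀ).submatrix id g = (C.submatrix g id)ᵀ := by rw [Matrix.transpose_submatrix]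
  have h2 : (Aᵀ).submatrix id g = (A.submatrix g id)ᵀ := by rw [Matrix.transpose_submatrix]
  rw [h1, h2, Matrix.det_transpose, Matrix.det_transpose, ← sq, ← sq]
  have h3 : C.submatrix g id = Matrix.of fun i j => σ (g i) * (A.submatrix g id) i j := by
    ext i j; rfl
  rw [h3, Matrix.det_mul_column, mul_pow]
  have h4 : (∏ i : Fin l, σ (g i)) ^ 2 ≤ (∏ i : Fin l, σ (Fin.castLE hld i)) ^ 2 := by
    have hnn : 0 ≤ ∏ i : Fin l, σ (g i) := Finset.prod_nonneg fun i _ => hpos _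
    exact pow_le_pow_left₀ hnn (my_prod_g_le hld hmono hpos hgm) 2
  exact mul_le_mul_of_nonneg_right h4 (sq_nonneg _)

lemma my_det_pos {d l : ℕ} (A : Matrix (Fin d) (Fin l) ℝ)
    (hinj : ∀ x : Fin l → ℝ, A *ᵥ x = 0 → x = 0) : 0 < Matrix.det (Aᵀ * A) := by
  classical
  have hposdef : (Aᵀ * A).PosDef := by
    refine Matrix.posDef_iff_dotProduct_mulVec.mpr ⟨?_, ?_⟩
    · have h := Matrix.isHermitian_conjTranspose_mul_self A
      rwa [Matrix.conjTranspose_eq_transpose_of_trivial] at h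
    · intro x hx
      have hAx : A *ᵥ x ≠ 0 := fun h => hx (hinj x h)
      have hstar : star x = x := by funext i; simp
      rw [hstar, ← Matrix.mulVec_mulVec, dotProduct_mulVec, Matrix.vecMul_transpose]
      show 0 < ∑ i, (A *ᵥ x) i * (A *ᵥ x) i
      obtain ⟨k, hk⟩ := Function.ne_iff.mp hAx
      refine Finset.sum_pos' (fun i _ => mul_self_nonneg _) ⟨k, Finset.mem_univ k, ?_⟩
      exact mul_self_pos.mpr (by simpa using hk)
  exact hposdef.det_pos

variable {E : Type*} [NormedAddCommGroup E] [InnerProductSpace ℝ E] [FiniteDimensional ℝ E]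

lemma my_gram_eq {d l : ℕ} (b : OrthonormalBasis (Fin d) ℝ E) (v : Fin l → E) :
    (Matrix.of fun i j : Fin l => (inner ℝ (v i) (v j) : ℝ))
      = (Matrix.of fun (k : Fin d) (j : Fin l) => (inner ℝ (b k) (v j) : ℝ))ᵀ
        * (Matrix.of fun (k : Fin d) (j : Fin l) => (inner ℝ (b k) (v j) : ℝ)) := by
  ext i j
  simp only [Matrix.mul_apply, Matrix.transpose_apply, Matrix.of_apply]
  rw [← b.sum_inner_mul_inner (v i) (v j)]
  exact Finset.sum_congr rfl fun k _ => by rw [real_inner_comm (v i) (b k)]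

lemma my_gramL_eq {d l : ℕ} (L : E →ₗ[ℝ] E) (σ : Fin d → ℝ)
    (b : OrthonormalBasis (Fin d) ℝ E)
    (hb : ∀ i, (LinearMap.adjoint L ∘ₗ L) (b i) = (σ i ^ 2 : ℝ) • b i) (v : Fin l → E) :
    (Matrix.of fun i j : Fin l => (inner ℝ (L (v i)) (L (v j)) : ℝ))
      = (Matrix.of fun (k : Fin d) (j : Fin l) =>
            σ k * (Matrix.of fun (k : Fin d) (j : Fin l) => (inner ℝ (b k) (v j) : ℝ)) k j)ᵀ
        * (Matrix.of fun (k : Fin d) (j : Fin l) =>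
            σ k * (Matrix.of fun (k : Fin d) (j : Fin l) => (inner ℝ (b k) (v j) : ℝ)) k j) := by
  ext i j
  simp only [Matrix.mul_apply, Matrix.transpose_apply, Matrix.of_apply]
  have h1 : (inner ℝ (L (v i)) (L (v j)) : ℝ)
      = inner ℝ (v i) ((LinearMap.adjoint L ∘ₗ L) (v j)) := by
    rw [LinearMap.comp_apply, LinearMap.adjoint_inner_right]
  rw [h1]
  have h2 : (LinearMap.adjoint L ∘ₗ L) (v j)
      = ∑ k, ((inner ℝ (b k) (v j) : ℝ) * σ k ^ 2) • b k := by
    conv_lhs => rw [← b.sum_repr' (v j)]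
    rw [map_sum]
    refine Finset.sum_congr rfl fun k _ => ?_
    rw [LinearMap.map_smul, hb k, smul_smul]
  rw [h2, inner_sum]
  refine Finset.sum_congr rfl fun k _ => ?_
  rw [real_inner_smul_right, real_inner_comm (v i) (b k)]
  ring

lemma my_gram_id {d l : ℕ} (hld : l ≤ d) (b : OrthonormalBasis (Fin d) ℝ E) :
    (Matrix.of fun i j : Fin l =>
      (inner ℝ (b (Fin.castLE hld i)) (b (Fin.castLE hld j)) : ℝ)) = 1 := by
  ext i j
  have horth := b.orthonormal
  rw [orthonormal_iff_ite] at horth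
  rw [Matrix.of_apply, horth, Matrix.one_apply]
  simp [Fin.castLE_injective hld |>.eq_iff]

lemma my_gramL_diag {d l : ℕ} (hld : l ≤ d) (σ : Fin d → ℝ) (L : E →ₗ[ℝ] E)
    (b : OrthonormalBasis (Fin d) ℝ E)
    (hb : ∀ i, (LinearMap.adjoint L ∘ₗ L) (b i) = (σ i ^ 2 : ℝ) • b i) :
    (Matrix.of fun i j : Fin l =>
      (inner ℝ (L (b (Fin.castLE hld i))) (L (b (Fin.castLE hld j))) : ℝ))
      = Matrix.diagonal (fun i : Fin l => σ (Fin.castLE hld i) ^ 2) := by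
  ext i j
  have horth := b.orthonormal
  rw [orthonormal_iff_ite] at horth
  have h1 : (inner ℝ (L (b (Fin.castLE hld i))) (L (b (Fin.castLE hld j))) : ℝ)
      = inner ℝ (b (Fin.castLE hld i)) ((LinearMap.adjoint L ∘ₗ L) (b (Fin.castLE hld j))) := by
    rw [LinearMap.comp_apply, LinearMap.adjoint_inner_right]
  rw [Matrix.of_apply, h1, hb, real_inner_smul_right, horth, Matrix.diagonal_apply]
  simp only [mul_ite, mul_one, mul_zero, Fin.castLE_injective hld |>.eq_iff]
  split <;> simp_all

end Aux

/-- For a linear map `L` on a `d`-dimensional real inner product space and `1 ≤ ℓ ≤ d`, the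
supremum over linearly independent tuples `(v_1, …, v_ℓ)` of the volume distortion ratio
`vol(L v_1, …, L v_ℓ)/vol(v_1, …, v_ℓ)` equals `σ_1(L)⋯σ_ℓ(L)`; in particular
`vol(L v_1, …, L v_ℓ) ≤ σ_1(L)⋯σ_ℓ(L) · vol(v_1, …, v_ℓ)` for every tuple. -/
theorem volume_distortion_sup_eq_sigmaProd
    {E : Type*} [NormedAddCommGroup E] [InnerProductSpace ℝ E] [FiniteDimensional ℝ E]
    {d : ℕ} (hd : 1 ≤ d) (hdim : Module.finrank ℝ E = d)
    (L : E →ₗ[ℝ] E) (ℓ : ℕ) (hℓ1 : 1 ≤ ℓ) (hℓd : ℓ ≤ d)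
    (σ : Fin d → ℝ) (hσ : IsSingularValues d L σ) :
    sSup {r : ℝ | ∃ v : Fin ℓ → E, LinearIndependent ℝ v ∧
        r = gramVol (fun i => L (v i)) / gramVol v} = sigmaProd σ ℓ ∧
      ∀ v : Fin ℓ → E, gramVol (fun i => L (v i)) ≤ sigmaProd σ ℓ * gramVol v := by
  obtain ⟨hmono, hpos, b, hb⟩ := hσ
  have hPsig : sigmaProd σ ℓ = ∏ i : Fin ℓ, σ (Fin.castLE hℓd i) := my_sigmaProd_eq hℓd σ
  set P : ℝ := ∏ i : Fin ℓ, σ (Fin.castLE hℓd i) with hP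
  have hPnn : 0 ≤ P := Finset.prod_nonneg fun i _ => hpos _
  -- the general inequality
  have hineq : ∀ v : Fin ℓ → E, gramVol (fun i => L (v i)) ≤ sigmaProd σ ℓ * gramVol v := by
    intro v
    have hg1 := my_gram_eq b v
    have hg2 := my_gramL_eq L σ b hb v
    have hkey := my_key_matrix hℓd σ hmono hpos
      (Matrix.of fun (k : Fin d) (j : Fin ℓ) => (inner ℝ (b k) (v j) : ℝ))
    show Real.sqrt (Matrix.det (Matrix.of fun i j : Fin ℓ => (inner ℝ (L (v i)) (L (v j)) : ℝ)))
      ≤ sigmaProd σ ℓ * Real.sqrt (Matrix.det (Matrix.of fun i j : Fin ℓ => (inner ℝ (v i) (v j) : ℝ)))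
    rw [hg1, hg2, hPsig]
    refine le_trans (Real.sqrt_le_sqrt hkey) (le_of_eq ?_)
    rw [Real.sqrt_mul (sq_nonneg P), Real.sqrt_sq hPnn]
  refine ⟨?_, hineq⟩
  -- the witness tuple
  set w : Fin ℓ → E := fun i => b (Fin.castLE hℓd i) with hw
  have hwLI : LinearIndependent ℝ w :=
    (b.orthonormal.linearIndependent).comp _ (Fin.castLE_injective hℓd)
  have hvol1 : gramVol w = 1 := by
    show Real.sqrt (Matrix.det (Matrix.of fun i j : Fin ℓ =>
      (inner ℝ (b (Fin.castLE hℓd i)) (b (Fin.castLE hℓd j)) : ℝ))) = 1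
    rw [my_gram_id hℓd b, Matrix.det_one, Real.sqrt_one]
  have hvolL : gramVol (fun i => L (w i)) = P := by
    show Real.sqrt (Matrix.det (Matrix.of fun i j : Fin ℓ =>
      (inner ℝ (L (b (Fin.castLE hℓd i))) (L (b (Fin.castLE hℓd j))) : ℝ))) = P
    rw [my_gramL_diag hℓd σ L b hb, Matrix.det_diagonal]
    have : ∏ i : Fin ℓ, σ (Fin.castLE hℓd i) ^ 2 = P ^ 2 := by
      rw [hP, ← Finset.prod_pow]
    rw [this, Real.sqrt_sq hPnn]
  have hmem : sigmaProd σ ℓ ∈ {r : ℝ | ∃ v : Fin ℓ → E, LinearIndependent ℝ v ∧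
      r = gramVol (fun i => L (v i)) / gramVol v} :=
    ⟨w, hwLI, by rw [hvolL, hvol1, div_one, hPsig]⟩
  have hub : ∀ r ∈ {r : ℝ | ∃ v : Fin ℓ → E, LinearIndependent ℝ v ∧
      r = gramVol (fun i => L (v i)) / gramVol v}, r ≤ sigmaProd σ ℓ := by
    rintro r ⟨v, hv, rfl⟩
    have hvpos : 0 < gramVol v := by
      show 0 < Real.sqrt (Matrix.det (Matrix.of fun i j : Fin ℓ => (inner ℝ (v i) (v j) : ℝ)))
      rw [my_gram_eq b v]
      refine Real.sqrt_pos.mpr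
        (my_det_pos (Matrix.of fun (k : Fin d) (j : Fin ℓ) => (inner ℝ (b k) (v j) : ℝ)) ?_)
      intro x hx
      have hy : (∑ j, x j • v j) = 0 := by
        have hcoef : ∀ k, (inner ℝ (b k) (∑ j, x j • v j) : ℝ) = 0 := by
          intro k
          rw [inner_sum]
          have := congrFun hx k
          simp only [Matrix.mulVec, dotProduct, Pi.zero_apply] at this
          rw [← this]
          exact Finset.sum_congr rfl fun j _ => by
            rw [real_inner_smul_right]; exact mul_comm _ _
        calc (∑ j, x j • v j)
            = ∑ k, (inner ℝ (b k) (∑ j, x j • v j) : ℝ) • b k := (b.sum_repr' _).symm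
          _ = 0 := by simp [hcoef]
      have := Fintype.linearIndependent_iff.mp hv x hy
      funext i
      exact this i
    rw [div_le_iff₀ hvpos]
    exact hineq v
  exact le_antisymm (csSup_le ⟨_, hmem⟩ hub) (le_csSup ⟨sigmaProd σ ℓ, hub⟩ hmem)
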